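/- Let K ⊆ ℝ^m be a closed convex pointed cone with nonempty interior and e ∈ int(K). Then the Gerstewitz function G_e is Lipschitz continuous on ℝ^m. -/

import Mathlib

open Set RealInnerProductSpace

noncomputable def gerstewitz {m : ℕ} (K : Set (EuclideanSpace ℝ (Fin m)))
    (e : EuclideanSpace ℝ (Fin m)) (y : EuclideanSpace ℝ (Fin m)) : ℝ :=
  sInf {t : ℝ | t • e - y ∈ K}

theorem gerstewitz_lipschitz {m : ℕ} (K : Set (EuclideanSpace ℝ (Fin m)))
    (e : EuclideanSpace ℝ (Fin m))
    (hKclosed : IsClosed K) (hKconv : Convex ℝ K)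
    (hKcone : ∀ (c : ℝ), 0 ≤ c → ∀ x ∈ K, c • x ∈ K)
    (hKpointed : K ∩ (-K) = {0}) (he : e ∈ interior K) :
    ∃ L : NNReal, LipschitzWith L (gerstewitz K e) := by
  rcases subsingleton_or_nontrivial (EuclideanSpace ℝ (Fin m)) with hsub | hnt
  · refine ⟨1, LipschitzWith.of_dist_le_mul fun x y => ?_⟩
    rw [Subsingleton.elim x y]
    simp [dist_nonneg]
  -- ε-ball
  obtain ⟨ε, hε, hball⟩ := Metric.mem_nhds_iff.mp (mem_interior_iff_mem_nhds.mp he)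
  have hε2 : (0:ℝ) < ε/2 := by linarith
  have h0K : (0 : EuclideanSpace ℝ (Fin m)) ∈ K := by
    have : (0 : EuclideanSpace ℝ (Fin m)) ∈ K ∩ (-K) := by rw [hKpointed]; exact rfl
    exact this.1
  have hadd : ∀ x ∈ K, ∀ y ∈ K, x + y ∈ K := by
    intro x hx y hy
    have h := hKconv hx hy (by norm_num : (0:ℝ) ≤ 1/2) (by norm_num : (0:ℝ) ≤ 1/2) (by norm_num)
    have h2 := hKcone 2 (by norm_num) _ h
    simpa [smul_add, smul_smul] using h2
  -- small perturbations of e are in K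
  have hpert : ∀ w : EuclideanSpace ℝ (Fin m), ‖w‖ ≤ ε/2 → e - w ∈ K := by
    intro w hw
    apply hball
    rw [Metric.mem_ball, dist_eq_norm]
    calc ‖e - w - e‖ = ‖w‖ := by rw [show e - w - e = -w by abel, norm_neg]
    _ < ε := by linarith
  -- key: for any v, ((2/ε)*‖v‖) • e - v ∈ K
  have key : ∀ v : EuclideanSpace ℝ (Fin m), ((2/ε) * ‖v‖) • e - v ∈ K := by
    intro v
    rcases eq_or_ne v 0 with rfl | hv
    · simpa using h0K
    · have hnv : (0:ℝ) < ‖v‖ := norm_pos_iff.mpr hv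
      set s : ℝ := (2/ε) * ‖v‖ with hs
      have hspos : 0 < s := by positivity
      have h1 : e - s⁻¹ • v ∈ K := by
        apply hpert
        rw [norm_smul, norm_inv, Real.norm_eq_abs, abs_of_pos hspos, hs, mul_inv,
          mul_assoc, inv_mul_cancel₀ (ne_of_gt hnv), mul_one, inv_div]
      have := hKcone s (le_of_lt hspos) _ h1
      have heq : s • (e - s⁻¹ • v) = s • e - v := by
        rw [smul_sub, smul_smul, mul_inv_cancel₀ (ne_of_gt hspos), one_smul]
      rwa [heq] at this
  -- -e plus small w cannot be in K
  have hneK : ∀ w : EuclideanSpace ℝ (Fin m), ‖w‖ ≤ ε/2 → -e + w ∈ K → False := by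
    intro w hw hmem
    have h1 : e - w ∈ K := hpert w hw
    have h2 : e - w ∈ -K := by
      rw [Set.mem_neg]
      rw [show -(e - w) = -e + w by abel]
      exact hmem
    have h3 : e - w = 0 := by
      have : e - w ∈ K ∩ (-K) := ⟨h1, h2⟩
      rwa [hKpointed, Set.mem_singleton_iff] at this
    have hew : e = w := by rwa [sub_eq_zero] at h3
    have hne : ‖e‖ ≤ ε/2 := hew ▸ hw
    -- then ball 0 (ε/2) ⊆ K
    have hball0 : ∀ x : EuclideanSpace ℝ (Fin m), ‖x‖ < ε/2 → x ∈ K := by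
      intro x hx
      apply hball
      rw [Metric.mem_ball, dist_eq_norm]
      calc ‖x - e‖ ≤ ‖x‖ + ‖e‖ := norm_sub_le _ _
      _ < ε := by linarith
    obtain ⟨x, hx⟩ := exists_ne (0 : EuclideanSpace ℝ (Fin m))
    have hnx : (0:ℝ) < ‖x‖ := norm_pos_iff.mpr hx
    set x' : EuclideanSpace ℝ (Fin m) := (ε/4/‖x‖) • x with hx'
    have hnx' : ‖x'‖ = ε/4 := by
      rw [hx', norm_smul, Real.norm_eq_abs, abs_of_pos (by positivity)]
      field_simp
    have hx'K : x' ∈ K := hball0 x' (by rw [hnx']; linarith)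
    have hx'K' : x' ∈ -K := by
      rw [Set.mem_neg]
      exact hball0 (-x') (by rw [norm_neg, hnx']; linarith)
    have : x' = 0 := by
      have : x' ∈ K ∩ (-K) := ⟨hx'K, hx'K'⟩
      rwa [hKpointed, Set.mem_singleton_iff] at this
    exact hx (by
      have hc : (ε/4/‖x‖) ≠ 0 := by positivity
      have := smul_eq_zero.mp (hx' ▸ this)
      rcases this with h | h
      · exact absurd h hc
      · exact h)
  -- lower bound for the defining sets
  have hlb : ∀ y : EuclideanSpace ℝ (Fin m), ∀ t ∈ {t : ℝ | t • e - y ∈ K},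
      -((2/ε) * ‖y‖) ≤ t := by
    intro y t ht
    by_contra hlt
    push_neg at hlt
    have hy2 : (0:ℝ) ≤ (2/ε) * ‖y‖ := by positivity
    have htneg : t < 0 := by linarith
    have hsc := hKcone (-t⁻¹) (by
      rw [neg_nonneg, inv_nonpos]
      exact le_of_lt htneg) _ ht
    have heq : (-t⁻¹) • (t • e - y) = -e + t⁻¹ • y := by
      rw [smul_sub, smul_smul]
      rw [neg_mul, inv_mul_cancel₀ (ne_of_lt htneg)]
      module
    rw [heq] at hsc
    apply hneK (t⁻¹ • y) ?_ hsc
    rw [norm_smul, norm_inv, Real.norm_eq_abs, abs_of_neg htneg]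
    rcases eq_or_lt_of_le (norm_nonneg y) with hy0 | hy0
    · rw [← hy0, mul_zero]; linarith
    · have h1 : (2/ε) * ‖y‖ < -t := by linarith
      have h2 : (-t)⁻¹ < ((2/ε) * ‖y‖)⁻¹ := by
        apply inv_strictAnti₀ (by positivity) h1
      have h3 : (-t)⁻¹ * ‖y‖ < ((2/ε) * ‖y‖)⁻¹ * ‖y‖ := by
        exact mul_lt_mul_of_pos_right h2 hy0
      have h4 : ((2/ε) * ‖y‖)⁻¹ * ‖y‖ = ε/2 := by field_simp
      linarith
  have hbdd : ∀ y : EuclideanSpace ℝ (Fin m), BddBelow {t : ℝ | t • e - y ∈ K} :=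
    fun y => ⟨-((2/ε) * ‖y‖), hlb y⟩
  have hne : ∀ y : EuclideanSpace ℝ (Fin m), {t : ℝ | t • e - y ∈ K}.Nonempty :=
    fun y => ⟨(2/ε) * ‖y‖, key y⟩
  -- the main estimate
  have main : ∀ y z : EuclideanSpace ℝ (Fin m),
      gerstewitz K e y ≤ gerstewitz K e z + (2/ε) * ‖y - z‖ := by
    intro y z
    unfold gerstewitz
    rw [← sub_le_iff_le_add]
    apply le_csInf (hne z)
    intro t ht
    rw [sub_le_iff_le_add]
    apply csInf_le (hbdd y)
    show (t + (2/ε) * ‖y - z‖) • e - y ∈ K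
    have h1 : ((2/ε) * ‖y - z‖) • e - (y - z) ∈ K := key (y - z)
    have h2 := hadd _ ht _ h1
    have heq : t • e - z + (((2/ε) * ‖y - z‖) • e - (y - z)) =
        (t + (2/ε) * ‖y - z‖) • e - y := by
      rw [add_smul]; module
    rwa [heq] at h2
  refine ⟨Real.toNNReal (2/ε), LipschitzWith.of_dist_le_mul fun x y => ?_⟩
  rw [Real.dist_eq, Real.coe_toNNReal _ (by positivity), dist_eq_norm]
  rw [abs_sub_le_iff]
  constructor
  · have := main x y; linarith
  · have := main y x
    rw [norm_sub_rev] at this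
    linarith
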